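/- (GWW fails on the comb tree.) Fix N ≥ 1 and D ≥ 1, and consider the Markov chain (η_j)_{1 ≤ j ≤ D} on {0,1,…,N} defined as follows: η_1 is Binomial(N, 1/2); and given η_j = m, sample S ~ Binomial(N - m, 1/2), then K ~ Binomial(N - m - S, m/(m+S)) if m + S > 0 and K = 0 if m + S = 0, and set η_{j+1} = m + K. Then there exist absolute constants C > 0 and c > 0 (independent of N and D) such that Pr[η_D < N] ≤ C·(N·e^{-cD} + e^{-cN}). Consequently the probability that Go-with-the-Winners (Algorithm 1) reaches the bottom-right vertex of the depth-D comb tree with N walkers is at most C·(N·e^{-cD} + e^{-cN}). -/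

import Mathlib

/-- The binomial probability mass function: `Pr[Bin(n,p) = k]` (zero for `k > n`). -/
noncomputable def binomPMF (n : ℕ) (p : ℝ) (k : ℕ) : ℝ :=
  (n.choose k : ℝ) * p ^ k * (1 - p) ^ (n - k)

/-- Transition probability `Pr[η_{j+1} = m' | η_j = m]` of the comb-tree chain on
`{0,…,N}`: given `η_j = m`, sample `S ~ Bin(N-m, 1/2)`, then `K ~ Bin(N-m-S, m/(m+S))`
when `m + S > 0` (and `K = 0` when `m + S = 0`), and set `η_{j+1} = m + K`. -/
noncomputable def combTrans (N m m' : ℕ) : ℝ :=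
  if m ≤ m' then
    ∑ S ∈ Finset.range (N - m + 1),
      binomPMF (N - m) (1 / 2) S *
        (if 0 < m + S then binomPMF (N - m - S) ((m : ℝ) / ((m : ℝ) + (S : ℝ))) (m' - m)
         else if m' = m then 1 else 0)
  else 0

/-- `combDist N j m = Pr[η_{j+1} = m]` for the comb-tree chain with `N` walkers:
`η_1 ~ Bin(N, 1/2)` and subsequent steps follow `combTrans`. -/
noncomputable def combDist (N : ℕ) : ℕ → ℕ → ℝ
  | 0, m => binomPMF N (1 / 2) m
  | j + 1, m' => ∑ m ∈ Finset.range (N + 1), combDist N j m * combTrans N m m'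


open Finset

lemma binom_sum (n : ℕ) (p : ℝ) : ∑ k ∈ range (n+1), binomPMF n p k = 1 := by
  have h := add_pow p (1-p) n
  simp only [add_sub_cancel, one_pow] at h
  calc ∑ k ∈ range (n+1), binomPMF n p k
      = ∑ k ∈ range (n+1), p ^ k * (1 - p) ^ (n - k) * (n.choose k : ℝ) :=
        Finset.sum_congr rfl (fun k _ => by unfold binomPMF; ring)
    _ = 1 := h.symm

lemma binom_shift (n : ℕ) (p : ℝ) (i : ℕ) :
    binomPMF (n+1) p (i+1) * ((i:ℝ)+1) = ((n:ℝ)+1) * p * binomPMF n p i := by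
  unfold binomPMF
  have h2 : ((n+1).choose (i+1) * (i+1) : ℕ) = ((n+1) * n.choose i : ℕ) := by
    simpa [Nat.succ_eq_add_one, mul_comm] using (Nat.add_one_mul_choose_eq n i).symm
  have h : ((n+1).choose (i+1) : ℝ) * ((i:ℝ)+1) = ((n:ℝ)+1) * (n.choose i : ℝ) := by
    have := congrArg (fun x : ℕ => (x : ℝ)) h2
    push_cast at this
    linarith
  have hsub : n + 1 - (i+1) = n - i := by omega
  rw [hsub]
  calc (((n+1).choose (i+1) : ℝ)) * p ^ (i+1) * (1-p)^(n-i) * ((i:ℝ)+1)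
      = (((n+1).choose (i+1) : ℝ) * ((i:ℝ)+1)) * (p ^ (i+1) * (1-p)^(n-i)) := by ring
    _ = (((n:ℝ)+1) * (n.choose i : ℝ)) * (p ^ (i+1) * (1-p)^(n-i)) := by rw [h]
    _ = ((n:ℝ)+1) * p * ((n.choose i : ℝ) * p ^ i * (1-p)^(n-i)) := by ring

lemma binom_mean (n : ℕ) (p : ℝ) :
    ∑ k ∈ range (n+1), binomPMF n p k * k = n * p := by
  cases n with
  | zero => simp
  | succ n =>
    rw [Finset.sum_range_succ']
    simp only [Nat.cast_zero, mul_zero, add_zero]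
    calc ∑ i ∈ range (n+1), binomPMF (n+1) p (i+1) * ((i+1 : ℕ):ℝ)
        = ∑ i ∈ range (n+1), ((n:ℝ)+1) * p * binomPMF n p i := by
          refine Finset.sum_congr rfl (fun i hi => ?_)
          have := binom_shift n p i
          push_cast
          linarith [this]
      _ = ((n:ℝ)+1) * p * ∑ i ∈ range (n+1), binomPMF n p i := by rw [Finset.mul_sum]
      _ = ((n+1 : ℕ):ℝ) * p := by rw [binom_sum]; push_cast; ring

lemma binom_sq (n : ℕ) (p : ℝ) :
    ∑ k ∈ range (n+1), binomPMF n p k * (k:ℝ)^2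
      = n * (n-1) * p^2 + n * p := by
  cases n with
  | zero => simp
  | succ n =>
    have key : ∑ k ∈ range (n+2), binomPMF (n+1) p k * ((k:ℝ)^2 - k)
        = ((n:ℝ)+1) * p * ((n:ℝ) * p) := by
      rw [Finset.sum_range_succ']
      simp only [Nat.cast_zero]
      have hc : ∀ i ∈ range (n+1), binomPMF (n+1) p (i+1) * (((i+1:ℕ):ℝ)^2 - ((i+1:ℕ):ℝ))
          = ((n:ℝ)+1) * p * (binomPMF n p i * i) := by
        intro i _
        have h := binom_shift n p i
        push_cast
        nlinarith [h]
      rw [Finset.sum_congr rfl hc]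
      rw [← Finset.mul_sum, binom_mean]
      simp
    have hm := binom_mean (n+1) p
    have hsplit : ∑ k ∈ range (n+2), binomPMF (n+1) p k * ((k:ℝ)^2 - k)
        = (∑ k ∈ range (n+2), binomPMF (n+1) p k * (k:ℝ)^2)
          - ∑ k ∈ range (n+2), binomPMF (n+1) p k * k := by
      rw [← Finset.sum_sub_distrib]; exact Finset.sum_congr rfl (fun k _ => by ring)
    push_cast at hm ⊢
    nlinarith [key, hsplit, hm]

lemma binomPMF_nonneg {n : ℕ} {p : ℝ} (h0 : 0 ≤ p) (h1 : p ≤ 1) (k : ℕ) :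
    0 ≤ binomPMF n p k := by
  unfold binomPMF
  have : (0:ℝ) ≤ 1 - p := by linarith
  positivity


lemma alg (x ν c p : ℝ) (hx : 0 < x) (hc : 0 < c)
    (hcp : c = x + ν * p) :
    1/c - (x-c)/c^2 + (x-c)^2/(c^2*x) + (-(1/c^2) + 2*(x-c)/(c^2*x))*(ν*p)
      + (1/(c^2*x))*(ν*(ν-1)*p^2 + ν*p)
    = 1/c + (ν*p)*(1-p)/(c^2*x) := by
  have hq : ν * p = c - x := by linarith
  have hq2 : ν*(ν-1)*p^2 + ν*p = (c-x)^2 - (ν*p)*p + ν*p := by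
    linear_combination (ν*p + c - x) * hq
  rw [hq2, hq]
  field_simp
  ring

lemma alg2 (x s ν : ℝ) (hx : 0 < x) (hs : 0 ≤ s) (hn : 0 ≤ ν) :
    1/(x*(x+s+ν)/(x+s)) + (ν*(x/(x+s)))*(1-(x/(x+s)))/((x*(x+s+ν)/(x+s))^2*x)
    = (x+s)/(x*(x+s+ν)) + s*ν/(x^2*(x+s+ν)^2) := by
  have hxs : 0 < x + s := by linarith
  have hM : 0 < x + s + ν := by linarith
  field_simp
  ring


lemma sum_quad (n : ℕ) (p A0 A1 A2 : ℝ) :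
    ∑ K ∈ range (n+1), binomPMF n p K * (A0 + A1*(K:ℝ) + A2*(K:ℝ)^2)
      = A0 + A1*((n:ℝ)*p) + A2*((n:ℝ)*((n:ℝ)-1)*p^2 + (n:ℝ)*p) := by
  have expand : ∀ K ∈ range (n+1), binomPMF n p K * (A0 + A1*(K:ℝ) + A2*(K:ℝ)^2)
      = A0 * binomPMF n p K + A1 * (binomPMF n p K * (K:ℝ))
        + A2 * (binomPMF n p K * (K:ℝ)^2) := fun K _ => by ring
  rw [Finset.sum_congr rfl expand, Finset.sum_add_distrib, Finset.sum_add_distrib,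
    ← Finset.mul_sum, ← Finset.mul_sum, ← Finset.mul_sum, binom_sum, binom_mean, binom_sq]
  ring

lemma quad_bound (x c : ℝ) (hx : 0 < x) (hc : 0 < c) (K : ℕ) :
    1/(x+(K:ℝ)) ≤ (1/c - (x-c)/c^2 + (x-c)^2/(c^2*x)) + (-(1/c^2) + 2*(x-c)/(c^2*x))*(K:ℝ)
      + (1/(c^2*x))*(K:ℝ)^2 := by
  have hK : (0:ℝ) ≤ (K:ℝ) := Nat.cast_nonneg K
  have hxK : 0 < x + (K:ℝ) := by linarith
  have key : (1/c - (x-c)/c^2 + (x-c)^2/(c^2*x)) + (-(1/c^2) + 2*(x-c)/(c^2*x))*(K:ℝ)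
      + (1/(c^2*x))*(K:ℝ)^2 - 1/(x+(K:ℝ))
      = (x+(K:ℝ)-c)^2*(K:ℝ)/(c^2*x*(x+(K:ℝ))) := by
    field_simp
    ring
  have hpos : (0:ℝ) ≤ (x+(K:ℝ)-c)^2*(K:ℝ)/(c^2*x*(x+(K:ℝ))) := by positivity
  linarith

lemma inner_bound (m S n : ℕ) (hm : 1 ≤ m) :
    ∑ K ∈ range (n+1), binomPMF n ((m:ℝ)/((m:ℝ)+(S:ℝ))) K * (1/((m:ℝ)+(K:ℝ)))
      ≤ ((m:ℝ)+(S:ℝ))/((m:ℝ)*((m:ℝ)+(S:ℝ)+(n:ℝ)))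
        + ((S:ℝ)*(n:ℝ))/((m:ℝ)^2*((m:ℝ)+(S:ℝ)+(n:ℝ))^2) := by
  have hx : (1:ℝ) ≤ (m:ℝ) := by exact_mod_cast hm
  have hx0 : (0:ℝ) < (m:ℝ) := by linarith
  have hs : (0:ℝ) ≤ (S:ℝ) := Nat.cast_nonneg S
  have hn : (0:ℝ) ≤ (n:ℝ) := Nat.cast_nonneg n
  have hxs : (0:ℝ) < (m:ℝ) + (S:ℝ) := by linarith
  have hM : (0:ℝ) < (m:ℝ) + (S:ℝ) + (n:ℝ) := by linarith
  set x : ℝ := (m:ℝ)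
  set s : ℝ := (S:ℝ)
  set ν : ℝ := (n:ℝ)
  have hp0 : 0 ≤ x/(x+s) := by positivity
  have hp1 : x/(x+s) ≤ 1 := by rw [div_le_one hxs]; linarith
  have hc0 : (0:ℝ) < x*(x+s+ν)/(x+s) := by positivity
  have hcp : x*(x+s+ν)/(x+s) = x + ν * (x/(x+s)) := by field_simp
  calc ∑ K ∈ range (n+1), binomPMF n (x/(x+s)) K * (1/(x+(K:ℝ)))
      ≤ ∑ K ∈ range (n+1), binomPMF n (x/(x+s)) K *
          ((1/(x*(x+s+ν)/(x+s)) - (x-x*(x+s+ν)/(x+s))/(x*(x+s+ν)/(x+s))^2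
              + (x-x*(x+s+ν)/(x+s))^2/((x*(x+s+ν)/(x+s))^2*x))
            + (-(1/(x*(x+s+ν)/(x+s))^2) + 2*(x-x*(x+s+ν)/(x+s))/((x*(x+s+ν)/(x+s))^2*x))*(K:ℝ)
            + (1/((x*(x+s+ν)/(x+s))^2*x))*(K:ℝ)^2) := by
        refine Finset.sum_le_sum (fun K _ => ?_)
        exact mul_le_mul_of_nonneg_left (quad_bound x _ hx0 hc0 K)
          (binomPMF_nonneg hp0 hp1 K)
    _ = (1/(x*(x+s+ν)/(x+s)) - (x-x*(x+s+ν)/(x+s))/(x*(x+s+ν)/(x+s))^2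
              + (x-x*(x+s+ν)/(x+s))^2/((x*(x+s+ν)/(x+s))^2*x))
        + (-(1/(x*(x+s+ν)/(x+s))^2) + 2*(x-x*(x+s+ν)/(x+s))/((x*(x+s+ν)/(x+s))^2*x))*(ν*(x/(x+s)))
        + (1/((x*(x+s+ν)/(x+s))^2*x))*(ν*(ν-1)*(x/(x+s))^2 + ν*(x/(x+s))) := by
        exact sum_quad n (x/(x+s)) _ _ _
    _ = 1/(x*(x+s+ν)/(x+s)) + (ν*(x/(x+s)))*(1-(x/(x+s)))/((x*(x+s+ν)/(x+s))^2*x) :=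
        alg x ν _ _ hx0 hc0 hcp
    _ = (x+s)/(x*(x+s+ν)) + s*ν/(x^2*(x+s+ν)^2) := alg2 x s ν hx0 hs hn


lemma binomPMF_zero_of_gt {n k : ℕ} (h : n < k) (p : ℝ) : binomPMF n p k = 0 := by
  unfold binomPMF
  rw [Nat.choose_eq_zero_of_lt h]
  simp

lemma trans_apply (N m : ℕ) (hm : 1 ≤ m) (hmN : m ≤ N) (f : ℕ → ℝ) :
    ∑ m' ∈ range (N+1), combTrans N m m' * f m'
    = ∑ S ∈ range (N-m+1), binomPMF (N-m) (1/2) S *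
        ∑ K ∈ range (N-m-S+1), binomPMF (N-m-S) ((m:ℝ)/((m:ℝ)+(S:ℝ))) K * f (m+K) := by
  have step1 : ∑ m' ∈ range (N+1), combTrans N m m' * f m'
      = ∑ m' ∈ Ico m (N+1), combTrans N m m' * f m' := by
    refine (Finset.sum_subset ?_ ?_).symm
    · intro y hy; rw [Finset.mem_Ico] at hy; exact Finset.mem_range.mpr hy.2
    · intro y hy hy2
      rw [Finset.mem_range] at hy; rw [Finset.mem_Ico] at hy2
      have : ¬ m ≤ y := by omega
      rw [combTrans, if_neg this, zero_mul]
  have step2 : ∑ m' ∈ Ico m (N+1), combTrans N m m' * f m'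
      = ∑ K ∈ range (N-m+1), combTrans N m (m+K) * f (m+K) := by
    rw [Finset.sum_Ico_eq_sum_range]
    have : N + 1 - m = N - m + 1 := by omega
    rw [this]
  have step3 : ∀ K, combTrans N m (m+K)
      = ∑ S ∈ range (N-m+1), binomPMF (N-m) (1/2) S *
          binomPMF (N-m-S) ((m:ℝ)/((m:ℝ)+(S:ℝ))) K := by
    intro K
    rw [combTrans, if_pos (Nat.le_add_right m K)]
    refine Finset.sum_congr rfl (fun S _ => ?_)
    have h1 : 0 < m + S := by omega
    rw [if_pos h1]
    have h2 : m + K - m = K := by omega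
    rw [h2]
  rw [step1, step2]
  calc ∑ K ∈ range (N-m+1), combTrans N m (m+K) * f (m+K)
      = ∑ K ∈ range (N-m+1), ∑ S ∈ range (N-m+1),
          binomPMF (N-m) (1/2) S * binomPMF (N-m-S) ((m:ℝ)/((m:ℝ)+(S:ℝ))) K * f (m+K) := by
        refine Finset.sum_congr rfl (fun K _ => ?_)
        rw [step3, Finset.sum_mul]
    _ = ∑ S ∈ range (N-m+1), ∑ K ∈ range (N-m+1),
          binomPMF (N-m) (1/2) S * binomPMF (N-m-S) ((m:ℝ)/((m:ℝ)+(S:ℝ))) K * f (m+K) :=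
        Finset.sum_comm
    _ = ∑ S ∈ range (N-m+1), binomPMF (N-m) (1/2) S *
          ∑ K ∈ range (N-m-S+1), binomPMF (N-m-S) ((m:ℝ)/((m:ℝ)+(S:ℝ))) K * f (m+K) := by
        refine Finset.sum_congr rfl (fun S hS => ?_)
        rw [Finset.mem_range] at hS
        rw [Finset.mul_sum]
        have hassoc : ∀ K ∈ range (N-m+1),
            binomPMF (N-m) (1/2) S * binomPMF (N-m-S) ((m:ℝ)/((m:ℝ)+(S:ℝ))) K * f (m+K)
            = binomPMF (N-m) (1/2) S * (binomPMF (N-m-S) ((m:ℝ)/((m:ℝ)+(S:ℝ))) K * f (m+K)) :=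
          fun K _ => by ring
        rw [Finset.sum_congr rfl hassoc]
        refine (Finset.sum_subset ?_ ?_).symm
        · intro K hK
          rw [Finset.mem_range] at hK ⊢
          omega
        · intro K hK hK2
          rw [Finset.mem_range] at hK hK2
          have hgt : N - m - S < K := by omega
          rw [binomPMF_zero_of_gt hgt]
          ring


lemma half_mem : (0:ℝ) ≤ 1/2 ∧ (1/2:ℝ) ≤ 1 := by norm_num

lemma ratio_mem (m S : ℕ) : 0 ≤ (m:ℝ)/((m:ℝ)+(S:ℝ)) ∧ (m:ℝ)/((m:ℝ)+(S:ℝ)) ≤ 1 := by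
  constructor
  · positivity
  · rcases eq_or_lt_of_le (by positivity : (0:ℝ) ≤ (m:ℝ)+(S:ℝ)) with h | h
    · rw [← h, div_zero]; norm_num
    · rw [div_le_one h]; have : (0:ℝ) ≤ (S:ℝ) := Nat.cast_nonneg S; linarith

lemma combTrans_nonneg (N m m' : ℕ) : 0 ≤ combTrans N m m' := by
  unfold combTrans
  split
  · refine Finset.sum_nonneg (fun S _ => mul_nonneg
      (binomPMF_nonneg half_mem.1 half_mem.2 S) ?_)
    split
    · exact binomPMF_nonneg (ratio_mem m S).1 (ratio_mem m S).2 _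
    · split <;> norm_num
  · exact le_refl 0

lemma combDist_nonneg (N j m : ℕ) : 0 ≤ combDist N j m := by
  induction j generalizing m with
  | zero => exact binomPMF_nonneg half_mem.1 half_mem.2 m
  | succ j ih =>
    exact Finset.sum_nonneg (fun i _ => mul_nonneg (ih i) (combTrans_nonneg N i m))

lemma binomPMF_zero_p (n k : ℕ) (hk : 1 ≤ k) : binomPMF n 0 k = 0 := by
  unfold binomPMF
  rw [zero_pow (by omega : k ≠ 0)]
  ring

lemma binomPMF_zero_p_zero (n : ℕ) : binomPMF n 0 0 = 1 := by
  unfold binomPMF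
  norm_num

lemma trans_zero_pos (N m' : ℕ) (h : 1 ≤ m') : combTrans N 0 m' = 0 := by
  unfold combTrans
  rw [if_pos (Nat.zero_le m')]
  refine Finset.sum_eq_zero (fun S _ => ?_)
  rcases Nat.eq_zero_or_pos S with hS | hS
  · subst hS
    rw [if_neg (by omega : ¬ 0 < 0 + 0), if_neg (by omega : ¬ m' = 0)]
    ring
  · rw [if_pos (by omega : 0 < 0 + S)]
    have hz : ((0:ℕ):ℝ) / (((0:ℕ):ℝ) + (S:ℝ)) = 0 := by
      norm_num
    rw [hz]
    rw [binomPMF_zero_p _ _ (by omega : 1 ≤ m' - 0)]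
    ring

lemma trans_zero_zero (N : ℕ) : combTrans N 0 0 = 1 := by
  unfold combTrans
  rw [if_pos (le_refl 0)]
  have : ∀ S ∈ range (N - 0 + 1), binomPMF (N - 0) (1/2) S *
      (if 0 < 0 + S then binomPMF (N - 0 - S) (((0:ℕ):ℝ) / (((0:ℕ):ℝ) + (S:ℝ))) (0 - 0)
       else if (0:ℕ) = 0 then (1:ℝ) else 0)
      = binomPMF (N - 0) (1/2) S := by
    intro S _
    rcases Nat.eq_zero_or_pos S with hS | hS
    · subst hS
      rw [if_neg (by omega : ¬ 0 < 0 + 0), if_pos rfl, mul_one]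
    · rw [if_pos (by omega : 0 < 0 + S)]
      have hz : ((0:ℕ):ℝ) / (((0:ℕ):ℝ) + (S:ℝ)) = 0 := by norm_num
      rw [hz]
      have : (0:ℕ) - 0 = 0 := rfl
      rw [this, binomPMF_zero_p_zero, mul_one]
  rw [Finset.sum_congr rfl this]
  have hN : N - 0 = N := rfl
  rw [hN, binom_sum]

lemma combDist_at_zero (N j : ℕ) : combDist N j 0 = (1/2:ℝ)^N := by
  induction j with
  | zero =>
    show binomPMF N (1/2) 0 = (1/2:ℝ)^N
    unfold binomPMF
    norm_num
  | succ j ih =>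
    show ∑ m ∈ Finset.range (N + 1), combDist N j m * combTrans N m 0 = (1/2:ℝ)^N
    rw [Finset.sum_eq_single 0]
    · rw [ih, trans_zero_zero, mul_one]
    · intro m _ hm
      rw [combTrans, if_neg (by omega : ¬ m ≤ 0), mul_zero]
    · intro h
      exact absurd (Finset.mem_range.mpr (by omega)) h

lemma combTrans_rowsum (N m : ℕ) (hmN : m ≤ N) :
    ∑ m' ∈ range (N+1), combTrans N m m' = 1 := by
  rcases Nat.eq_zero_or_pos m with hm | hm
  · subst hm
    rw [Finset.sum_eq_single 0]
    · exact trans_zero_zero N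
    · intro m' _ hm'; exact trans_zero_pos N m' (by omega)
    · intro h; exact absurd (Finset.mem_range.mpr (by omega)) h
  · have := trans_apply N m hm hmN (fun _ => 1)
    simp only [mul_one] at this
    rw [this]
    have inner : ∀ S ∈ range (N-m+1),
        binomPMF (N-m) (1/2) S * ∑ K ∈ range (N-m-S+1),
          binomPMF (N-m-S) ((m:ℝ)/((m:ℝ)+(S:ℝ))) K
        = binomPMF (N-m) (1/2) S := by
      intro S _
      rw [binom_sum, mul_one]
    rw [Finset.sum_congr rfl inner, binom_sum]

lemma combDist_mass (N : ℕ) (j : ℕ) :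
    ∑ m ∈ range (N+1), combDist N j m = 1 := by
  induction j with
  | zero => exact binom_sum N (1/2)
  | succ j ih =>
    show ∑ m' ∈ range (N+1), ∑ m ∈ range (N+1), combDist N j m * combTrans N m m' = 1
    rw [Finset.sum_comm]
    calc ∑ m ∈ range (N+1), ∑ m' ∈ range (N+1), combDist N j m * combTrans N m m'
        = ∑ m ∈ range (N+1), combDist N j m * ∑ m' ∈ range (N+1), combTrans N m m' := by
          refine Finset.sum_congr rfl (fun m _ => ?_)
          rw [Finset.mul_sum]
      _ = ∑ m ∈ range (N+1), combDist N j m := by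
          refine Finset.sum_congr rfl (fun m hm => ?_)
          rw [Finset.mem_range] at hm
          rw [combTrans_rowsum N m (by omega), mul_one]
      _ = 1 := ih


noncomputable def lyap (N x : ℕ) : ℝ := if x = 0 then 0 else 1/(x:ℝ) - 1/(N:ℝ)

lemma drift (N m : ℕ) (hN : 1 ≤ N) (hmN : m ≤ N) :
    ∑ m' ∈ range (N+1), combTrans N m m' * lyap N m' ≤ (3/4) * lyap N m := by
  rcases Nat.eq_zero_or_pos m with hm | hm
  · subst hm
    have hz : ∀ m' ∈ range (N+1), combTrans N 0 m' * lyap N m' = 0 := by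
      intro m' _
      rcases Nat.eq_zero_or_pos m' with h | h
      · subst h; rw [lyap, if_pos rfl, mul_zero]
      · rw [trans_zero_pos N m' h, zero_mul]
    rw [Finset.sum_eq_zero hz, lyap, if_pos rfl, mul_zero]
  · have hx : (1:ℝ) ≤ (m:ℝ) := by exact_mod_cast hm
    have hx0 : (0:ℝ) < (m:ℝ) := by linarith
    have hNN : (1:ℝ) ≤ (N:ℝ) := by exact_mod_cast hN
    have hNN0 : (0:ℝ) < (N:ℝ) := by linarith
    have hxN : (m:ℝ) ≤ (N:ℝ) := by exact_mod_cast hmN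
    rw [trans_apply N m hm hmN (lyap N)]
    set A1 : ℝ := 1/((m:ℝ)*(N:ℝ)) + ((N:ℝ)-(m:ℝ))/((m:ℝ)^2*(N:ℝ)^2) with hA1
    set A2 : ℝ := -(1/((m:ℝ)^2*(N:ℝ)^2)) with hA2
    have key : ∀ S ∈ range (N-m+1),
        binomPMF (N-m) (1/2) S *
          (∑ K ∈ range (N-m-S+1), binomPMF (N-m-S) ((m:ℝ)/((m:ℝ)+(S:ℝ))) K * lyap N (m+K))
        ≤ binomPMF (N-m) (1/2) S * (0 + A1*(S:ℝ) + A2*(S:ℝ)^2) := by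
      intro S hS
      rw [Finset.mem_range] at hS
      refine mul_le_mul_of_nonneg_left ?_ (binomPMF_nonneg half_mem.1 half_mem.2 S)
      have hcast : ((N-m-S:ℕ):ℝ) = (N:ℝ) - (m:ℝ) - (S:ℝ) := by
        rw [Nat.sub_sub, Nat.cast_sub (by omega : m + S ≤ N)]
        push_cast
        ring
      have hlyap : ∀ K ∈ range (N-m-S+1),
          binomPMF (N-m-S) ((m:ℝ)/((m:ℝ)+(S:ℝ))) K * lyap N (m+K)
          = binomPMF (N-m-S) ((m:ℝ)/((m:ℝ)+(S:ℝ))) K * (1/((m:ℝ)+(K:ℝ)))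
            - binomPMF (N-m-S) ((m:ℝ)/((m:ℝ)+(S:ℝ))) K * (1/(N:ℝ)) := by
        intro K _
        rw [lyap, if_neg (by omega : ¬ m + K = 0)]
        have hmk : ((m+K:ℕ):ℝ) = (m:ℝ) + (K:ℝ) := by push_cast; ring
        rw [hmk]
        ring
      rw [Finset.sum_congr rfl hlyap, Finset.sum_sub_distrib]
      have h2 : ∑ K ∈ range (N-m-S+1), binomPMF (N-m-S) ((m:ℝ)/((m:ℝ)+(S:ℝ))) K * (1/(N:ℝ))
          = 1/(N:ℝ) := by
        rw [← Finset.sum_mul, binom_sum, one_mul]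
      rw [h2]
      have hib := inner_bound m S (N-m-S) hm
      rw [hcast] at hib
      have heq : ((m:ℝ)+(S:ℝ))/((m:ℝ)*((m:ℝ)+(S:ℝ)+((N:ℝ)-(m:ℝ)-(S:ℝ))))
            + ((S:ℝ)*((N:ℝ)-(m:ℝ)-(S:ℝ)))/((m:ℝ)^2*((m:ℝ)+(S:ℝ)+((N:ℝ)-(m:ℝ)-(S:ℝ)))^2)
            - 1/(N:ℝ)
          = 0 + A1*(S:ℝ) + A2*(S:ℝ)^2 := by
        rw [hA1, hA2]
        have h3 : (m:ℝ)+(S:ℝ)+((N:ℝ)-(m:ℝ)-(S:ℝ)) = (N:ℝ) := by ring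
        rw [h3]
        field_simp
        ring
      linarith [hib]
    calc ∑ S ∈ range (N-m+1), binomPMF (N-m) (1/2) S *
          (∑ K ∈ range (N-m-S+1), binomPMF (N-m-S) ((m:ℝ)/((m:ℝ)+(S:ℝ))) K * lyap N (m+K))
        ≤ ∑ S ∈ range (N-m+1), binomPMF (N-m) (1/2) S * (0 + A1*(S:ℝ) + A2*(S:ℝ)^2) :=
          Finset.sum_le_sum key
      _ = 0 + A1*(((N-m:ℕ):ℝ)*(1/2))
            + A2*(((N-m:ℕ):ℝ)*(((N-m:ℕ):ℝ)-1)*(1/2)^2 + ((N-m:ℕ):ℝ)*(1/2)) :=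
          sum_quad (N-m) (1/2) 0 A1 A2
      _ ≤ (3/4) * lyap N m := by
          have hρ : ((N-m:ℕ):ℝ) = (N:ℝ) - (m:ℝ) := by
            rw [Nat.cast_sub hmN]
          rw [hρ, lyap, if_neg (by omega : ¬ m = 0)]
          rw [hA1, hA2]
          have hρ0 : (0:ℝ) ≤ (N:ℝ) - (m:ℝ) := by linarith
          have hdiff : (3/4) * (1/(m:ℝ) - 1/(N:ℝ))
              - (0 + (1/((m:ℝ)*(N:ℝ)) + ((N:ℝ)-(m:ℝ))/((m:ℝ)^2*(N:ℝ)^2))*(((N:ℝ)-(m:ℝ))*(1/2))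
                + (-(1/((m:ℝ)^2*(N:ℝ)^2)))*(((N:ℝ)-(m:ℝ))*(((N:ℝ)-(m:ℝ))-1)*(1/2)^2
                  + ((N:ℝ)-(m:ℝ))*(1/2)))
              = ((m:ℝ)*(N:ℝ)*((N:ℝ)-(m:ℝ)) - ((N:ℝ)-(m:ℝ))*((N:ℝ)-(m:ℝ)) + ((N:ℝ)-(m:ℝ)))
                / (4*(m:ℝ)^2*(N:ℝ)^2) := by
            field_simp
            ring
          have hnum : 0 ≤ (m:ℝ)*(N:ℝ)*((N:ℝ)-(m:ℝ)) - ((N:ℝ)-(m:ℝ))*((N:ℝ)-(m:ℝ)) + ((N:ℝ)-(m:ℝ)) := by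
            nlinarith [mul_nonneg (mul_nonneg (sub_nonneg.mpr hx) (le_of_lt hNN0)) hρ0,
              mul_nonneg hρ0 (sub_nonneg.mpr hxN)]
          have hpos : 0 ≤ ((m:ℝ)*(N:ℝ)*((N:ℝ)-(m:ℝ)) - ((N:ℝ)-(m:ℝ))*((N:ℝ)-(m:ℝ)) + ((N:ℝ)-(m:ℝ)))
              / (4*(m:ℝ)^2*(N:ℝ)^2) := by
            apply div_nonneg hnum; positivity
          linarith [hdiff, hpos]


lemma lyap_nonneg (N m : ℕ) (hmN : m ≤ N) : 0 ≤ lyap N m := by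
  rw [lyap]
  split
  · exact le_refl 0
  · rename_i h
    have hm : (1:ℝ) ≤ (m:ℝ) := by exact_mod_cast Nat.one_le_iff_ne_zero.mpr h
    have hN : (m:ℝ) ≤ (N:ℝ) := by exact_mod_cast hmN
    have h1 : 1/(N:ℝ) ≤ 1/(m:ℝ) := by
      apply one_div_le_one_div_of_le (by linarith) hN
    linarith

lemma lyap_le_one (N m : ℕ) : lyap N m ≤ 1 := by
  rw [lyap]
  split
  · norm_num
  · rename_i h
    have hm : (1:ℝ) ≤ (m:ℝ) := by exact_mod_cast Nat.one_le_iff_ne_zero.mpr h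
    have h1 : 1/(m:ℝ) ≤ 1 := by
      rw [div_le_one (by linarith)]; linarith
    have h2 : 0 ≤ 1/(N:ℝ) := by positivity
    linarith

lemma decay (N : ℕ) (hN : 1 ≤ N) (j : ℕ) :
    ∑ m ∈ range (N+1), combDist N j m * lyap N m ≤ (3/4)^j := by
  induction j with
  | zero =>
    simp only [pow_zero]
    calc ∑ m ∈ range (N+1), combDist N 0 m * lyap N m
        ≤ ∑ m ∈ range (N+1), combDist N 0 m := by
          refine Finset.sum_le_sum (fun m _ => ?_)
          calc combDist N 0 m * lyap N m ≤ combDist N 0 m * 1 :=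
                mul_le_mul_of_nonneg_left (lyap_le_one N m) (combDist_nonneg N 0 m)
            _ = combDist N 0 m := mul_one _
      _ = 1 := combDist_mass N 0
  | succ j ih =>
    have expand : ∑ m' ∈ range (N+1), combDist N (j+1) m' * lyap N m'
        = ∑ m ∈ range (N+1), combDist N j m *
            ∑ m' ∈ range (N+1), combTrans N m m' * lyap N m' := by
      show ∑ m' ∈ range (N+1), (∑ m ∈ range (N+1), combDist N j m * combTrans N m m') * lyap N m'
        = _
      calc ∑ m' ∈ range (N+1), (∑ m ∈ range (N+1), combDist N j m * combTrans N m m') * lyap N m'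
          = ∑ m' ∈ range (N+1), ∑ m ∈ range (N+1),
              combDist N j m * (combTrans N m m' * lyap N m') := by
            refine Finset.sum_congr rfl (fun m' _ => ?_)
            rw [Finset.sum_mul]
            exact Finset.sum_congr rfl (fun m _ => by ring)
        _ = ∑ m ∈ range (N+1), ∑ m' ∈ range (N+1),
              combDist N j m * (combTrans N m m' * lyap N m') := Finset.sum_comm
        _ = ∑ m ∈ range (N+1), combDist N j m *
              ∑ m' ∈ range (N+1), combTrans N m m' * lyap N m' := by
            refine Finset.sum_congr rfl (fun m _ => ?_)
            rw [Finset.mul_sum]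
    rw [expand]
    calc ∑ m ∈ range (N+1), combDist N j m *
            ∑ m' ∈ range (N+1), combTrans N m m' * lyap N m'
        ≤ ∑ m ∈ range (N+1), combDist N j m * ((3/4) * lyap N m) := by
          refine Finset.sum_le_sum (fun m hm => ?_)
          rw [Finset.mem_range] at hm
          exact mul_le_mul_of_nonneg_left (drift N m hN (by omega)) (combDist_nonneg N j m)
      _ = (3/4) * ∑ m ∈ range (N+1), combDist N j m * lyap N m := by
          rw [Finset.mul_sum]
          exact Finset.sum_congr rfl (fun m _ => by ring)
      _ ≤ (3/4) * (3/4)^j := by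
          have h34 : (0:ℝ) ≤ 3/4 := by norm_num
          exact mul_le_mul_of_nonneg_left ih h34
      _ = (3/4)^(j+1) := by rw [pow_succ]; ring


/-- Theorem 4 (GWW fails on the comb tree): there are absolute constants `C, c > 0`,
independent of `N` and `D`, such that the comb-tree chain satisfies
`Pr[η_D < N] ≤ C·(N·e^{-cD} + e^{-cN})`; hence with `N` walkers Go-with-the-Winners
reaches the bottom-right vertex of the depth-`D` comb tree with at most this probability. -/
theorem gww_comb_failure :
    ∃ C > (0 : ℝ), ∃ c > (0 : ℝ), ∀ N D : ℕ, 1 ≤ N → 1 ≤ D →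
      ∑ m ∈ Finset.range N, combDist N (D - 1) m
        ≤ C * ((N : ℝ) * Real.exp (-c * D) + Real.exp (-c * N)) := by
  have hβ : 0 < Real.log (4/3) := Real.log_pos (by norm_num)
  refine ⟨2, by norm_num, Real.log (4/3) / 4, by positivity, ?_⟩
  intro N D hN hD
  set c : ℝ := Real.log (4/3) / 4 with hc
  have hc0 : 0 < c := by positivity
  have hN0 : (0:ℝ) < (N:ℝ) := by exact_mod_cast hN
  have hD0 : (0:ℝ) < (D:ℝ) := by exact_mod_cast hD
  -- Step A : splitting the sum
  have hsplit : Finset.range N = insert 0 (Finset.Ico 1 N) := by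
    ext a
    simp only [Finset.mem_range, Finset.mem_insert, Finset.mem_Ico]
    omega
  have h0notin : (0:ℕ) ∉ Finset.Ico 1 N := by simp
  have hA : ∑ m ∈ Finset.range N, combDist N (D-1) m
      ≤ (1/2:ℝ)^N + (N:ℝ)^2 * (3/4:ℝ)^(D-1) := by
    rw [hsplit, Finset.sum_insert h0notin, combDist_at_zero]
    have htail : ∑ m ∈ Finset.Ico 1 N, combDist N (D-1) m
        ≤ (N:ℝ)^2 * (3/4:ℝ)^(D-1) := by
      have step1 : ∑ m ∈ Finset.Ico 1 N, combDist N (D-1) m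
          ≤ ∑ m ∈ Finset.Ico 1 N, (N:ℝ)^2 * (combDist N (D-1) m * lyap N m) := by
        refine Finset.sum_le_sum (fun m hm => ?_)
        rw [Finset.mem_Ico] at hm
        have hm1 : (1:ℝ) ≤ (m:ℝ) := by exact_mod_cast hm.1
        have hm1' : (0:ℝ) < (m:ℝ) := by linarith
        have hmN : (m:ℝ) + 1 ≤ (N:ℝ) := by exact_mod_cast hm.2
        have hkey : 1 ≤ (N:ℝ)^2 * lyap N m := by
          rw [lyap, if_neg (by omega : ¬ m = 0)]
          have e1 : (N:ℝ)^2 * (1/(m:ℝ) - 1/(N:ℝ)) = (N:ℝ)*((N:ℝ)-(m:ℝ))/(m:ℝ) := by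
            field_simp
          rw [e1, le_div_iff₀ hm1']
          nlinarith
        calc combDist N (D-1) m = combDist N (D-1) m * 1 := (mul_one _).symm
          _ ≤ combDist N (D-1) m * ((N:ℝ)^2 * lyap N m) :=
              mul_le_mul_of_nonneg_left hkey (combDist_nonneg N (D-1) m)
          _ = (N:ℝ)^2 * (combDist N (D-1) m * lyap N m) := by ring
      have step2 : ∑ m ∈ Finset.Ico 1 N, (N:ℝ)^2 * (combDist N (D-1) m * lyap N m)
          = (N:ℝ)^2 * ∑ m ∈ Finset.Ico 1 N, combDist N (D-1) m * lyap N m := by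
        rw [Finset.mul_sum]
      have step3 : ∑ m ∈ Finset.Ico 1 N, combDist N (D-1) m * lyap N m
          ≤ ∑ m ∈ Finset.range (N+1), combDist N (D-1) m * lyap N m := by
        refine Finset.sum_le_sum_of_subset_of_nonneg ?_ ?_
        · intro a ha; rw [Finset.mem_Ico] at ha; exact Finset.mem_range.mpr (by omega)
        · intro a ha _
          rw [Finset.mem_range] at ha
          exact mul_nonneg (combDist_nonneg N (D-1) a) (lyap_nonneg N a (by omega))
      calc ∑ m ∈ Finset.Ico 1 N, combDist N (D-1) m
          ≤ (N:ℝ)^2 * ∑ m ∈ Finset.Ico 1 N, combDist N (D-1) m * lyap N m := by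
            rw [← step2]; exact step1
        _ ≤ (N:ℝ)^2 * ∑ m ∈ Finset.range (N+1), combDist N (D-1) m * lyap N m := by
            apply mul_le_mul_of_nonneg_left step3; positivity
        _ ≤ (N:ℝ)^2 * (3/4:ℝ)^(D-1) := by
            apply mul_le_mul_of_nonneg_left (decay N hN (D-1)); positivity
    linarith
  -- Step B : total mass
  have hB : ∑ m ∈ Finset.range N, combDist N (D-1) m ≤ 1 := by
    calc ∑ m ∈ Finset.range N, combDist N (D-1) m
        ≤ ∑ m ∈ Finset.range (N+1), combDist N (D-1) m := by
          refine Finset.sum_le_sum_of_subset_of_nonneg ?_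
            (fun a _ _ => combDist_nonneg N (D-1) a)
          intro a ha; rw [Finset.mem_range] at ha ⊢; omega
      _ = 1 := combDist_mass N (D-1)
  -- exponential bounds
  have h12 : (1/2:ℝ)^N ≤ Real.exp (-c * N) := by
    have e1 : (1/2:ℝ)^N = Real.exp ((N:ℝ) * Real.log (1/2)) := by
      rw [Real.exp_nat_mul, Real.exp_log (by norm_num : (0:ℝ) < 1/2)]
    rw [e1, Real.exp_le_exp]
    have hlog : Real.log (1/2) = - Real.log 2 := by
      rw [one_div, Real.log_inv]
    rw [hlog]
    have hcle : c ≤ Real.log 2 := by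
      have : Real.log (4/3) ≤ Real.log 2 := Real.log_le_log (by norm_num) (by norm_num)
      rw [hc]; linarith
    nlinarith
  have h34 : (3/4:ℝ)^(D-1) = Real.exp (-(((D:ℝ)) - 1) * (4*c)) := by
    have e1 : (3/4:ℝ)^(D-1) = Real.exp (((D-1:ℕ):ℝ) * Real.log (3/4)) := by
      rw [Real.exp_nat_mul, Real.exp_log (by norm_num : (0:ℝ) < 3/4)]
    have hlog : Real.log (3/4) = - Real.log (4/3) := by
      rw [show (3/4:ℝ) = ((4/3:ℝ))⁻¹ by norm_num, Real.log_inv]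
    have hcast : ((D-1:ℕ):ℝ) = (D:ℝ) - 1 := by
      rw [Nat.cast_sub hD]; norm_num
    rw [e1, hlog, hcast, hc]
    ring_nf
  by_cases hcase : (N:ℝ) ≤ Real.exp (2*c*(D:ℝ))
  · have hexpbd : (N:ℝ)^2 * (3/4:ℝ)^(D-1) ≤ (4/3) * ((N:ℝ) * Real.exp (-c * D)) := by
      have h1 : (N:ℝ) * (3/4:ℝ)^(D-1) ≤ Real.exp (2*c*(D:ℝ)) * Real.exp (-(((D:ℝ)) - 1) * (4*c)) := by
        rw [h34]
        exact mul_le_mul_of_nonneg_right hcase (le_of_lt (Real.exp_pos _))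
      have h2 : Real.exp (2*c*(D:ℝ)) * Real.exp (-(((D:ℝ)) - 1) * (4*c))
          = Real.exp (2*c*(D:ℝ) + (-(((D:ℝ)) - 1) * (4*c))) := (Real.exp_add _ _).symm
      have h3 : Real.exp (2*c*(D:ℝ) + (-(((D:ℝ)) - 1) * (4*c))) ≤ Real.exp (4*c - c*(D:ℝ)) := by
        rw [Real.exp_le_exp]
        nlinarith [mul_nonneg (le_of_lt hc0) (le_of_lt hD0)]
      have h4 : Real.exp (4*c - c*(D:ℝ)) = (4/3) * Real.exp (-c * D) := by
        rw [show (4*c - c*(D:ℝ)) = 4*c + (-c*(D:ℝ)) by ring, Real.exp_add]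
        congr 1
        rw [hc]
        rw [show (4:ℝ) * (Real.log (4/3) / 4) = Real.log (4/3) by ring]
        exact Real.exp_log (by norm_num)
      calc (N:ℝ)^2 * (3/4:ℝ)^(D-1) = (N:ℝ) * ((N:ℝ) * (3/4:ℝ)^(D-1)) := by ring
        _ ≤ (N:ℝ) * ((4/3) * Real.exp (-c * D)) := by
            apply mul_le_mul_of_nonneg_left _ (le_of_lt hN0)
            calc (N:ℝ) * (3/4:ℝ)^(D-1)
                ≤ Real.exp (2*c*(D:ℝ)) * Real.exp (-(((D:ℝ)) - 1) * (4*c)) := h1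
              _ = Real.exp (2*c*(D:ℝ) + (-(((D:ℝ)) - 1) * (4*c))) := h2
              _ ≤ Real.exp (4*c - c*(D:ℝ)) := h3
              _ = (4/3) * Real.exp (-c * D) := h4
        _ = (4/3) * ((N:ℝ) * Real.exp (-c * D)) := by ring
    have hnn1 : 0 ≤ (N:ℝ) * Real.exp (-c * D) := by positivity
    have hnn2 : 0 ≤ Real.exp (-c * (N:ℝ)) := le_of_lt (Real.exp_pos _)
    linarith [hA, h12, hexpbd]
  · push_neg at hcase
    have h1 : Real.exp (c*(D:ℝ)) ≤ (N:ℝ) := by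
      have e1 : Real.exp (c*(D:ℝ)) ≤ Real.exp (2*c*(D:ℝ)) := by
        rw [Real.exp_le_exp]
        nlinarith [mul_nonneg (le_of_lt hc0) (le_of_lt hD0)]
      linarith
    have h2 : (1:ℝ) ≤ (N:ℝ) * Real.exp (-c * D) := by
      have := mul_le_mul_of_nonneg_right h1 (le_of_lt (Real.exp_pos (-c * (D:ℝ))))
      calc (1:ℝ) = Real.exp (c*(D:ℝ)) * Real.exp (-c * (D:ℝ)) := by
            rw [← Real.exp_add]; norm_num
        _ ≤ (N:ℝ) * Real.exp (-c * D) := this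
    have hnn2 : 0 ≤ Real.exp (-c * (N:ℝ)) := le_of_lt (Real.exp_pos _)
    linarith [hB, h2]
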